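/- Let n, W > 0, set Q = W²/n, and let k be an integer with 0 ≤ k ≤ n/W. In the Euclidean plane ℝ², let v = (n, k·W)/√(n² + k²·W²) be the unit vector in the direction (n, kW), let c = (n/2, (k+1)·W/2), and let p = c − (n/2)·v. Then for every point u = (0, y) with 0 ≤ y ≤ W one has (3k² − 8k)·Q/16 ≤ ⟨p − u, v⟩ ≤ (k² + 2k)·Q/4. Equivalently, writing u⊥ for the orthogonal projection of u onto the line through p perpendicular to v, (3k² − 8k)·Q/16 ≤ ⟨u⊥ − u, v⟩ ≤ (k² + 2k)·Q/4. -/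

import Mathlib

open scoped RealInnerProductSpace

set_option maxHeartbeats 1000000

/-- The point `(a, b)` of the Euclidean plane `ℝ²`. -/
noncomputable def pt2 (a b : ℝ) : EuclideanSpace ℝ (Fin 2) :=
  (WithLp.equiv 2 (Fin 2 → ℝ)).symm ![a, b]

theorem statement15 (n W : ℝ) (hn : 0 < n) (hW : 0 < W) (k : ℕ) (hk : (k : ℝ) ≤ n / W)
    (y : ℝ) (hy0 : 0 ≤ y) (hyW : y ≤ W) :
    (3 * (k : ℝ) ^ 2 - 8 * k) * (W ^ 2 / n) / 16 ≤
        ⟪(pt2 (n / 2) (((k : ℝ) + 1) * W / 2) -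
            (n / 2) • ((Real.sqrt (n ^ 2 + (k : ℝ) ^ 2 * W ^ 2))⁻¹ • pt2 n ((k : ℝ) * W))) -
            pt2 0 y,
          (Real.sqrt (n ^ 2 + (k : ℝ) ^ 2 * W ^ 2))⁻¹ • pt2 n ((k : ℝ) * W)⟫ ∧
      ⟪(pt2 (n / 2) (((k : ℝ) + 1) * W / 2) -
            (n / 2) • ((Real.sqrt (n ^ 2 + (k : ℝ) ^ 2 * W ^ 2))⁻¹ • pt2 n ((k : ℝ) * W))) -
            pt2 0 y,
          (Real.sqrt (n ^ 2 + (k : ℝ) ^ 2 * W ^ 2))⁻¹ • pt2 n ((k : ℝ) * W)⟫ ≤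
        ((k : ℝ) ^ 2 + 2 * k) * (W ^ 2 / n) / 4 := by
  have hK0 : (0:ℝ) ≤ (k : ℝ) := Nat.cast_nonneg k
  have ht : (k : ℝ) * W ≤ n := (le_div_iff₀ hW).mp hk
  set K : ℝ := (k : ℝ) with hKdef
  set s : ℝ := Real.sqrt (n ^ 2 + K ^ 2 * W ^ 2) with hsdef
  have hs0 : 0 < s := Real.sqrt_pos.2 (by positivity)
  have hss : s ^ 2 = n ^ 2 + K ^ 2 * W ^ 2 := Real.sq_sqrt (by positivity)
  have hinner :
      ⟪(pt2 (n / 2) ((K + 1) * W / 2) - (n / 2) • (s⁻¹ • pt2 n (K * W))) - pt2 0 y,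
        s⁻¹ • pt2 n (K * W)⟫ =
      (n ^ 2 + K * (K + 1) * W ^ 2 - 2 * (K * W) * y) / (2 * s) - n / 2 := by
    have h1 : n * n + K * W * (K * W) = s ^ 2 := by rw [hss]; ring
    simp only [inner_sub_left, inner_smul_left, real_inner_smul_right, RCLike.star_def,
      conj_trivial]
    simp [pt2, EuclideanSpace.inner_eq_star_dotProduct]
    have hnorm : ‖!₂[n, K * W]‖ ^ 2 = s ^ 2 := by
      rw [EuclideanSpace.norm_eq, Real.sq_sqrt (by positivity)]; simp [Fin.sum_univ_two]; rw [hss]; ring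
    rw [hnorm]
    field_simp
    ring
  rw [hinner]
  -- squared key facts
  have hn2 : K ^ 2 * W ^ 2 ≤ n ^ 2 := by nlinarith [ht, mul_nonneg hK0 hW.le]
  constructor
  · -- lower bound
    have key : (8 * n ^ 2 + (3 * K ^ 2 - 8 * K) * W ^ 2) * s ≤
        8 * n * (n ^ 2 + K * (K - 1) * W ^ 2) := by
      rcases Nat.eq_zero_or_pos k with hk0 | hk1
      · subst hk0
        simp only [hKdef, Nat.cast_zero]
        have : s = n := by
          rw [hsdef, hKdef]; push_cast; rw [show n ^ 2 + (0:ℝ) ^ 2 * W ^ 2 = n ^ 2 by ring,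
            Real.sqrt_sq hn.le]
        rw [this]; nlinarith [hn]
      · have hK1 : (1:ℝ) ≤ K := by rw [hKdef]; exact_mod_cast Nat.one_le_iff_ne_zero.mpr hk1.ne'
        have hWt : W ≤ K * W := by nlinarith [hK1, hW]
        have hL : 0 ≤ 8 * n ^ 2 + (3 * K ^ 2 - 8 * K) * W ^ 2 := by
          nlinarith [hn2, hWt, mul_nonneg hK0 hW.le, sq_nonneg (K * W), hW]
        have hR : 0 ≤ 8 * n * (n ^ 2 + K * (K - 1) * W ^ 2) := by
          nlinarith [mul_pos hn (mul_pos hn hn),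
            mul_nonneg hn.le (mul_nonneg (mul_nonneg hK0 (sub_nonneg.2 hK1)) (sq_nonneg W))]
        have hsq : ((8 * n ^ 2 + (3 * K ^ 2 - 8 * K) * W ^ 2) * s) ^ 2 ≤
            (8 * n * (n ^ 2 + K * (K - 1) * W ^ 2)) ^ 2 := by
          have hD : (8 * n * (n ^ 2 + K * (K - 1) * W ^ 2)) ^ 2 -
              (8 * n ^ 2 + (3 * K ^ 2 - 8 * K) * W ^ 2) ^ 2 * (n ^ 2 + K ^ 2 * W ^ 2) =
              16 * n ^ 4 * K ^ 2 * W ^ 2 + 7 * n ^ 2 * K ^ 4 * W ^ 4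
                + 48 * n ^ 2 * K ^ 3 * W ^ 4 + 48 * K ^ 5 * W ^ 6
                - 9 * K ^ 6 * W ^ 6 - 64 * K ^ 4 * W ^ 6 := by ring
          rw [mul_pow, hss]
          nlinarith [hD,
            mul_nonneg (mul_nonneg (by positivity : (0:ℝ) ≤ K ^ 2 * W ^ 2) (sub_nonneg.2 hn2))
              (by positivity : (0:ℝ) ≤ n ^ 2 + K ^ 2 * W ^ 2),
            mul_nonneg (by positivity : (0:ℝ) ≤ K ^ 4 * W ^ 4) (sub_nonneg.2 hn2),
            mul_nonneg (by positivity : (0:ℝ) ≤ K ^ 4 * W ^ 6) (sub_nonneg.2 hK1),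
            mul_nonneg (by positivity : (0:ℝ) ≤ K ^ 3 * W ^ 4) (sub_nonneg.2 hn2),
            (by positivity : (0:ℝ) ≤ K ^ 6 * W ^ 6),
            (by positivity : (0:ℝ) ≤ n ^ 2 * K ^ 3 * W ^ 4)]
        nlinarith [hsq, mul_nonneg hL hs0.le, hR]
    have hAy : n ^ 2 + K * (K - 1) * W ^ 2 ≤ n ^ 2 + K * (K + 1) * W ^ 2 - 2 * (K * W) * y := by
      nlinarith [mul_nonneg hK0 hW.le, hyW, hy0]
    have expand : (n ^ 2 + K * (K - 1) * W ^ 2) / (2 * s) - n / 2 -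
        (3 * K ^ 2 - 8 * K) * (W ^ 2 / n) / 16 =
        (8 * n * (n ^ 2 + K * (K - 1) * W ^ 2)
          - (8 * n ^ 2 + (3 * K ^ 2 - 8 * K) * W ^ 2) * s) / (16 * n * s) := by
      field_simp
      ring
    have h1 : (3 * K ^ 2 - 8 * K) * (W ^ 2 / n) / 16 ≤
        (n ^ 2 + K * (K - 1) * W ^ 2) / (2 * s) - n / 2 := by
      have hnum : 0 ≤ (8 * n * (n ^ 2 + K * (K - 1) * W ^ 2)
          - (8 * n ^ 2 + (3 * K ^ 2 - 8 * K) * W ^ 2) * s) / (16 * n * s) :=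
        div_nonneg (by linarith [key]) (by positivity)
      linarith [expand ▸ hnum]
    have h2 : (n ^ 2 + K * (K - 1) * W ^ 2) / (2 * s) ≤
        (n ^ 2 + K * (K + 1) * W ^ 2 - 2 * (K * W) * y) / (2 * s) :=
      (div_le_div_iff_of_pos_right (by positivity)).mpr hAy
    linarith
  · -- upper bound
    have key : 2 * n * (n ^ 2 + K * (K + 1) * W ^ 2) ≤
        (2 * n ^ 2 + (K ^ 2 + 2 * K) * W ^ 2) * s := by
      have hL : 0 ≤ 2 * n * (n ^ 2 + K * (K + 1) * W ^ 2) := by positivity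
      have hU : 0 ≤ 2 * n ^ 2 + (K ^ 2 + 2 * K) * W ^ 2 := by positivity
      have hsq : (2 * n * (n ^ 2 + K * (K + 1) * W ^ 2)) ^ 2 ≤
          ((2 * n ^ 2 + (K ^ 2 + 2 * K) * W ^ 2) * s) ^ 2 := by
        have hD : (2 * n ^ 2 + (K ^ 2 + 2 * K) * W ^ 2) ^ 2 * (n ^ 2 + K ^ 2 * W ^ 2) -
            (2 * n * (n ^ 2 + K * (K + 1) * W ^ 2)) ^ 2 =
            K ^ 6 * W ^ 6 + 4 * K ^ 5 * W ^ 6 + 4 * K ^ 4 * W ^ 6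
              + 4 * n ^ 2 * K ^ 3 * W ^ 4 + n ^ 2 * K ^ 4 * W ^ 4 := by ring
        rw [show ((2 * n ^ 2 + (K ^ 2 + 2 * K) * W ^ 2) * s) ^ 2 =
          (2 * n ^ 2 + (K ^ 2 + 2 * K) * W ^ 2) ^ 2 * (n ^ 2 + K ^ 2 * W ^ 2) by
            rw [mul_pow, hss]]
        nlinarith [hD, (by positivity : (0:ℝ) ≤ K ^ 6 * W ^ 6),
          (by positivity : (0:ℝ) ≤ K ^ 5 * W ^ 6),
          (by positivity : (0:ℝ) ≤ K ^ 4 * W ^ 6),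
          (by positivity : (0:ℝ) ≤ n ^ 2 * K ^ 3 * W ^ 4),
          (by positivity : (0:ℝ) ≤ n ^ 2 * K ^ 4 * W ^ 4)]
      nlinarith [hsq, mul_nonneg hU hs0.le, hL]
    have hAy : n ^ 2 + K * (K + 1) * W ^ 2 - 2 * (K * W) * y ≤
        n ^ 2 + K * (K + 1) * W ^ 2 := by
      nlinarith [mul_nonneg (mul_nonneg hK0 hW.le) hy0]
    have expand : (K ^ 2 + 2 * K) * (W ^ 2 / n) / 4 -
        ((n ^ 2 + K * (K + 1) * W ^ 2) / (2 * s) - n / 2) =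
        ((2 * n ^ 2 + (K ^ 2 + 2 * K) * W ^ 2) * s
          - 2 * n * (n ^ 2 + K * (K + 1) * W ^ 2)) / (4 * n * s) := by
      field_simp
      ring
    have h1 : (n ^ 2 + K * (K + 1) * W ^ 2) / (2 * s) - n / 2 ≤
        (K ^ 2 + 2 * K) * (W ^ 2 / n) / 4 := by
      have hnum : 0 ≤ ((2 * n ^ 2 + (K ^ 2 + 2 * K) * W ^ 2) * s
          - 2 * n * (n ^ 2 + K * (K + 1) * W ^ 2)) / (4 * n * s) :=
        div_nonneg (by linarith [key]) (by positivity)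
      linarith [expand ▸ hnum]
    have h2 : (n ^ 2 + K * (K + 1) * W ^ 2 - 2 * (K * W) * y) / (2 * s) ≤
        (n ^ 2 + K * (K + 1) * W ^ 2) / (2 * s) :=
      (div_le_div_iff_of_pos_right (by positivity)).mpr hAy
    linarith
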